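/- Let f : [0,∞) → ℝ be three times continuously differentiable with 2·f'''(x) + f(x)·f''(x) = 0 for all x ≥ 0, f(0) = f'(0) = 0, and f'(x) → 1 as x → ∞, and set V := f' (the Blasius profile). Then V(x) > 0, V'(x) > 0 and V''(x) < 0 for all x ∈ (0,∞), and there exist constants C > 0 and δ > 0 such that |V(x) − 1| ≤ C·e^{−δx}, |V'(x)| ≤ C·e^{−δx} and |V''(x)| ≤ C·e^{−δx} for all x ≥ 0 (i.e., V → 1, V' → 0 and V'' → 0 exponentially as x → ∞). -/

import Mathlib

open MeasureTheory Set Filter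

/-- Iterated derivative on `[0, ∞)` of a real-valued function. -/
noncomputable def Dr (f : ℝ → ℝ) (n : ℕ) : ℝ → ℝ := iteratedDerivWithin n f (Set.Ici 0)

/-- `f` is a solution of the Blasius problem: `f` is three times continuously
differentiable, `2f''' + ff'' = 0` on `[0, ∞)`, `f(0) = f'(0) = 0`, and
`f'(x) → 1` as `x → ∞`. -/
def IsBlasiusSolution (f : ℝ → ℝ) : Prop :=
  ContDiffOn ℝ 3 f (Set.Ici 0) ∧
  (∀ x : ℝ, 0 ≤ x → 2 * Dr f 3 x + f x * Dr f 2 x = 0) ∧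
  f 0 = 0 ∧ Dr f 1 0 = 0 ∧
  Filter.Tendsto (Dr f 1) Filter.atTop (nhds 1)

/-- Properties of the Blasius profile `V := f'`: `V > 0`, `V' > 0`, `V'' < 0` on
`(0, ∞)`, and `V → 1`, `V' → 0`, `V'' → 0` exponentially as `x → ∞`. -/
theorem blasius_profile_properties
    (f : ℝ → ℝ) (hf : IsBlasiusSolution f) :
    (∀ x : ℝ, 0 < x → 0 < Dr f 1 x ∧ 0 < Dr f 2 x ∧ Dr f 3 x < 0) ∧
    (∃ C δ : ℝ, 0 < C ∧ 0 < δ ∧ ∀ x : ℝ, 0 ≤ x →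
      |Dr f 1 x - 1| ≤ C * Real.exp (-δ * x) ∧
      |Dr f 2 x| ≤ C * Real.exp (-δ * x) ∧
      |Dr f 3 x| ≤ C * Real.exp (-δ * x)) := by
  obtain ⟨hc, hode, hf0, hf10, hlim⟩ := hf
  have hUD : UniqueDiffOn ℝ (Ici (0:ℝ)) := uniqueDiffOn_Ici 0
  -- derivative structure
  have hd : ∀ n : ℕ, (n:WithTop ℕ∞) < 3 → ∀ x : ℝ, 0 ≤ x →
      HasDerivWithinAt (Dr f n) (Dr f (n+1) x) (Ici 0) x := by
    intro n hn x hx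
    have h := (hc.differentiableOn_iteratedDerivWithin hn hUD x hx).hasDerivWithinAt
    have e : Dr f (n+1) x = derivWithin (Dr f n) (Ici 0) x :=
      congrFun iteratedDerivWithin_succ x
    rw [e]; exact h
  have hdf : ∀ x : ℝ, 0 ≤ x → HasDerivWithinAt f (Dr f 1 x) (Ici 0) x := by
    intro x hx
    have := hd 0 (by norm_num) x hx
    simpa [Dr, iteratedDerivWithin_zero] using this
  have hd1 : ∀ x : ℝ, 0 ≤ x → HasDerivWithinAt (Dr f 1) (Dr f 2 x) (Ici 0) x :=
    hd 1 (by norm_num)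
  have hd2 : ∀ x : ℝ, 0 ≤ x → HasDerivWithinAt (Dr f 2) (Dr f 3 x) (Ici 0) x :=
    hd 2 (by norm_num)
  have hcont : ∀ n : ℕ, (n:WithTop ℕ∞) ≤ 3 → ContinuousOn (Dr f n) (Ici 0) :=
    fun n hn => hc.continuousOn_iteratedDerivWithin hn hUD
  -- full-space derivatives at interior points
  have hDf : ∀ x : ℝ, 0 < x → HasDerivAt f (Dr f 1 x) x :=
    fun x hx => (hdf x hx.le).hasDerivAt (Ici_mem_nhds hx)
  have hD1 : ∀ x : ℝ, 0 < x → HasDerivAt (Dr f 1) (Dr f 2 x) x :=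
    fun x hx => (hd1 x hx.le).hasDerivAt (Ici_mem_nhds hx)
  have hode' : ∀ x : ℝ, 0 ≤ x → Dr f 3 x = -(f x * Dr f 2 x) / 2 := by
    intro x hx; have := hode x hx; linarith
  -- integrating factor
  set fe : ℝ → ℝ := fun t => f (max t 0) with hfe_def
  have hfe_cont : Continuous fe :=
    hc.continuousOn.comp_continuous (continuous_id.max continuous_const)
      (fun t => le_max_right t 0)
  set F : ℝ → ℝ := fun x => ∫ t in (0:ℝ)..x, fe t with hF_def
  have hF : ∀ x : ℝ, HasDerivAt F (fe x) x := fun x =>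
    intervalIntegral.integral_hasDerivAt_right (hfe_cont.intervalIntegrable _ _)
      (hfe_cont.stronglyMeasurableAtFilter _ _) hfe_cont.continuousAt
  have hFc : Continuous F := by
    have : Differentiable ℝ F := fun x => (hF x).differentiableAt
    exact this.continuous
  have hfe_eq : ∀ x : ℝ, 0 ≤ x → fe x = f x := fun x hx => by
    simp [hfe_def, max_eq_left hx]
  set h : ℝ → ℝ := fun x => Dr f 2 x * Real.exp (F x / 2) with hh_def
  have hhd : ∀ x : ℝ, 0 ≤ x → HasDerivWithinAt h 0 (Ici 0) x := by
    intro x hx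
    have hexp : HasDerivWithinAt (fun y => Real.exp (F y / 2))
        (Real.exp (F x / 2) * (fe x / 2)) (Ici 0) x :=
      (((hF x).hasDerivWithinAt).div_const 2).exp
    have hm := (hd2 x hx).mul hexp
    have : Dr f 3 x * Real.exp (F x / 2) + Dr f 2 x * (Real.exp (F x / 2) * (fe x / 2)) = 0 := by
      rw [hfe_eq x hx, hode' x hx]; ring
    rwa [this] at hm
  set a : ℝ := Dr f 2 0 with ha_def
  have hF0 : F 0 = 0 := intervalIntegral.integral_same
  have hhconst : ∀ x : ℝ, 0 ≤ x → h x = a := by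
    intro x hx
    have hhc : ContinuousOn h (Icc 0 x) :=
      ((hcont 2 (by norm_num)).mul
        ((Real.continuous_exp.comp (hFc.div_const 2)).continuousOn)).mono Icc_subset_Ici_self
    have := constant_of_has_deriv_right_zero hhc
      (fun y hy => (hhd y hy.1).mono (Ici_subset_Ici.mpr hy.1)) x ⟨hx, le_rfl⟩
    rw [this]
    simp [hh_def, hF0, ha_def]
  have hf2eq : ∀ x : ℝ, 0 ≤ x → Dr f 2 x = a * Real.exp (-(F x) / 2) := by
    intro x hx
    have hcst := hhconst x hx
    have hne : Real.exp (F x / 2) ≠ 0 := (Real.exp_pos _).ne'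
    have : Dr f 2 x * Real.exp (F x / 2) = a := hcst
    rw [neg_div, Real.exp_neg]
    field_simp
    linarith [this]
  -- a > 0
  have ha : 0 < a := by
    by_contra hna
    push_neg at hna
    have hf2np : ∀ x : ℝ, 0 ≤ x → Dr f 2 x ≤ 0 := by
      intro x hx
      rw [hf2eq x hx]
      exact mul_nonpos_of_nonpos_of_nonneg hna (Real.exp_pos _).le
    have hanti : AntitoneOn (Dr f 1) (Ici 0) := by
      apply antitoneOn_of_deriv_nonpos (convex_Ici 0) (hcont 1 (by norm_num))
      · intro x hx
        rw [interior_Ici] at hx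
        exact (hD1 x hx).differentiableAt.differentiableWithinAt
      · intro x hx
        rw [interior_Ici] at hx
        rw [(hD1 x hx).deriv]
        exact hf2np x hx.le
    have h1 : (1:ℝ) ≤ 0 := by
      apply le_of_tendsto hlim
      filter_upwards [eventually_ge_atTop (0:ℝ)] with y hy
      calc Dr f 1 y ≤ Dr f 1 0 := hanti self_mem_Ici hy hy
        _ = 0 := hf10
    linarith
  have hf2pos : ∀ x : ℝ, 0 ≤ x → 0 < Dr f 2 x := by
    intro x hx; rw [hf2eq x hx]; positivity
  -- V = f' strictly increasing, positive on (0,∞)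
  have hmono1 : StrictMonoOn (Dr f 1) (Ici 0) := by
    apply strictMonoOn_of_deriv_pos (convex_Ici 0) (hcont 1 (by norm_num))
    intro x hx
    rw [interior_Ici] at hx
    rw [(hD1 x hx).deriv]
    exact hf2pos x hx.le
  have hf1pos : ∀ x : ℝ, 0 < x → 0 < Dr f 1 x := by
    intro x hx
    have := hmono1 self_mem_Ici (le_of_lt hx : (0:ℝ) ≤ x) hx
    rwa [hf10] at this
  have hmonof : StrictMonoOn f (Ici 0) := by
    apply strictMonoOn_of_deriv_pos (convex_Ici 0) hc.continuousOn
    intro x hx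
    rw [interior_Ici] at hx
    rw [(hDf x hx).deriv]
    exact hf1pos x hx
  have hfpos : ∀ x : ℝ, 0 < x → 0 < f x := by
    intro x hx
    have := hmonof self_mem_Ici (le_of_lt hx : (0:ℝ) ≤ x) hx
    rwa [hf0] at this
  have hfnonneg : ∀ x : ℝ, 0 ≤ x → 0 ≤ f x := by
    intro x hx
    rcases hx.eq_or_lt with rfl | hx
    · rw [hf0]
    · exact (hfpos x hx).le
  have part1 : ∀ x : ℝ, 0 < x → 0 < Dr f 1 x ∧ 0 < Dr f 2 x ∧ Dr f 3 x < 0 := by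
    intro x hx
    refine ⟨hf1pos x hx, hf2pos x hx.le, ?_⟩
    rw [hode' x hx.le]
    have := mul_pos (hfpos x hx) (hf2pos x hx.le)
    linarith
  -- f' ≤ 1
  have hf1le1 : ∀ x : ℝ, 0 ≤ x → Dr f 1 x ≤ 1 := by
    intro x hx
    apply ge_of_tendsto hlim
    filter_upwards [eventually_ge_atTop x] with y hy
    rcases eq_or_lt_of_le hy with rfl | hy'
    · exact le_rfl
    · exact (hmono1 hx (hx.trans hy) hy').le
  have hmono1' : MonotoneOn (Dr f 1) (Ici 0) := hmono1.monotoneOn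
  have hmonof' : MonotoneOn f (Ici 0) := hmonof.monotoneOn
  -- pick x₀ with f'(x₀) ≥ 1/2
  obtain ⟨x₀, hx₀half, hx₀0⟩ :
      ∃ x₀ : ℝ, (1/2:ℝ) ≤ Dr f 1 x₀ ∧ 0 ≤ x₀ := by
    have := (hlim.eventually (eventually_ge_nhds (by norm_num : (1:ℝ)/2 < 1))).and
      (eventually_ge_atTop (0:ℝ))
    obtain ⟨x₀, h1, h2⟩ := this.exists
    exact ⟨x₀, h1, h2⟩
  set x₁ : ℝ := x₀ + 1 with hx₁_def
  have hx₁0 : (0:ℝ) ≤ x₁ := by linarith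
  -- f x ≥ 1/2 for x ≥ x₁
  have hchi : MonotoneOn (fun x => f x - x / 2) (Ici x₀) := by
    apply monotoneOn_of_deriv_nonneg (convex_Ici x₀)
    · exact ((hc.continuousOn.mono (Ici_subset_Ici.mpr hx₀0)).sub
        (continuousOn_id.div_const 2))
    · intro x hx
      rw [interior_Ici] at hx
      have hx0 : 0 < x := lt_of_le_of_lt hx₀0 hx
      exact ((hDf x hx0).sub ((hasDerivAt_id x).div_const 2)).differentiableAt.differentiableWithinAt
    · intro x hx
      rw [interior_Ici] at hx
      have hx0 : 0 < x := lt_of_le_of_lt hx₀0 hx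
      have hder : HasDerivAt (fun y => f y - y / 2) (Dr f 1 x - 1/2) x := by
        exact (hDf x hx0).sub ((hasDerivAt_id x).div_const 2)
      rw [hder.deriv]
      have : (1/2:ℝ) ≤ Dr f 1 x := le_trans hx₀half (hmono1' hx₀0 hx0.le hx.le)
      linarith
  have hfx₁ : (1/2:ℝ) ≤ f x₁ := by
    have hmem : x₁ ∈ Ici x₀ := by simp [hx₁_def]
    have := hchi self_mem_Ici hmem (by linarith : x₀ ≤ x₁)
    have hfx₀ : 0 ≤ f x₀ := hfnonneg x₀ hx₀0
    have hx₁e : x₁ = x₀ + 1 := hx₁_def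
    simp only at this
    linarith
  have hfge : ∀ x : ℝ, x₁ ≤ x → (1/2:ℝ) ≤ f x := by
    intro x hx
    exact le_trans hfx₁ (hmonof' hx₁0 (hx₁0.trans hx) hx)
  -- F x ≥ 0, and F x ≥ (x - x₁)/2 for x ≥ x₁
  have hfe_nonneg : ∀ t : ℝ, 0 ≤ fe t := fun t => hfnonneg _ (le_max_right t 0)
  have hFmono : Monotone F := by
    apply monotone_of_deriv_nonneg (fun x => (hF x).differentiableAt)
    intro x
    rw [(hF x).deriv]
    exact hfe_nonneg x
  have hFnonneg : ∀ x : ℝ, 0 ≤ x → 0 ≤ F x := by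
    intro x hx
    calc (0:ℝ) = F 0 := hF0.symm
      _ ≤ F x := hFmono hx
  have hpsi : MonotoneOn (fun x => F x - (x - x₁) / 2) (Ici x₁) := by
    apply monotoneOn_of_deriv_nonneg (convex_Ici x₁)
    · exact (hFc.continuousOn).sub (((continuous_id.sub continuous_const).div_const 2).continuousOn)
    · intro x hx
      exact ((hF x).sub (((hasDerivAt_id x).sub_const x₁).div_const 2)).differentiableAt.differentiableWithinAt
    · intro x hx
      rw [interior_Ici] at hx
      have hder : HasDerivAt (fun y => F y - (y - x₁) / 2) (fe x - 1/2) x := by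
        have := (hF x).sub (((hasDerivAt_id x).sub_const x₁).div_const 2)
        exact this
      rw [hder.deriv]
      have hx0 : 0 ≤ x := hx₁0.trans hx.le
      rw [hfe_eq x hx0]
      have := hfge x hx.le
      linarith
  have hFlower : ∀ x : ℝ, x₁ ≤ x → (x - x₁) / 2 ≤ F x := by
    intro x hx
    have := hpsi self_mem_Ici hx hx
    have h0 : 0 ≤ F x₁ := hFnonneg x₁ hx₁0
    simp only at this
    linarith
  -- bound on f''
  set C₂ : ℝ := a * Real.exp (x₁ / 4) with hC₂_def
  have hC₂ : 0 < C₂ := by positivity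
  have hf2bound : ∀ x : ℝ, 0 ≤ x → Dr f 2 x ≤ C₂ * Real.exp (-x / 4) := by
    intro x hx
    rw [hf2eq x hx, hC₂_def, mul_assoc, ← Real.exp_add]
    apply mul_le_mul_of_nonneg_left _ ha.le
    rw [Real.exp_le_exp]
    rcases le_or_gt x₁ x with hcase | hcase
    · have := hFlower x hcase
      linarith
    · have := hFnonneg x hx
      linarith
  -- |f' - 1| bound
  have hphi : AntitoneOn (fun x => Dr f 1 x + 4 * C₂ * Real.exp (-x / 4)) (Ici 0) := by
    have hde : ∀ x : ℝ, HasDerivAt (fun y : ℝ => Real.exp (-y / 4))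
        (Real.exp (-x / 4) * (-(1/4))) x := by
      intro x
      have h1 : HasDerivAt (fun y : ℝ => -y / 4) (-(1/4)) x := by
        have := (hasDerivAt_id x).neg.div_const 4
        exact this.congr_deriv (by norm_num)
      exact h1.exp
    apply antitoneOn_of_deriv_nonpos (convex_Ici 0)
    · exact (hcont 1 (by norm_num)).add
        (continuous_const.mul ((continuous_id.neg.div_const 4).rexp)).continuousOn
    · intro x hx
      rw [interior_Ici] at hx
      exact ((hD1 x hx).add (((hde x).const_mul (4*C₂)))).differentiableAt.differentiableWithinAt
    · intro x hx
      rw [interior_Ici] at hx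
      rw [HasDerivAt.deriv (f := fun x => Dr f 1 x + 4 * C₂ * Real.exp (-x / 4)) ((hD1 x hx).add ((hde x).const_mul (4*C₂)))]
      have := hf2bound x hx.le
      linarith
  have hb1 : ∀ x : ℝ, 0 ≤ x → 1 - Dr f 1 x ≤ 4 * C₂ * Real.exp (-x / 4) := by
    intro x hx
    have key : (1:ℝ) ≤ Dr f 1 x + 4 * C₂ * Real.exp (-x / 4) := by
      apply le_of_tendsto hlim
      filter_upwards [eventually_ge_atTop x] with y hy
      calc Dr f 1 y ≤ Dr f 1 y + 4 * C₂ * Real.exp (-y / 4) := le_add_of_nonneg_right (by positivity)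
        _ ≤ Dr f 1 x + 4 * C₂ * Real.exp (-x / 4) := hphi hx (hx.trans hy) hy
    linarith
  -- f x ≤ x
  have hfle : ∀ x : ℝ, 0 ≤ x → f x ≤ x := by
    intro x hx
    have hm : MonotoneOn (fun y : ℝ => y - f y) (Ici 0) := by
      apply monotoneOn_of_deriv_nonneg (convex_Ici 0)
      · exact continuousOn_id.sub hc.continuousOn
      · intro y hy
        rw [interior_Ici] at hy
        exact ((hasDerivAt_id y).sub (hDf y hy)).differentiableAt.differentiableWithinAt
      · intro y hy
        rw [interior_Ici] at hy
        have hder : HasDerivAt (fun z => z - f z) (1 - Dr f 1 y) y := by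
          exact (hasDerivAt_id y).sub (hDf y hy)
        rw [hder.deriv]
        have := hf1le1 y hy.le
        linarith
    have := hm self_mem_Ici hx hx
    simp only [hf0] at this
    linarith
  refine ⟨part1, 4 * C₂, 1/8, by positivity, by norm_num, ?_⟩
  intro x hx
  have hE : Real.exp (-x / 4) ≤ Real.exp (-(1/8) * x) := by
    rw [Real.exp_le_exp]; linarith
  have hEpos : (0:ℝ) < Real.exp (-(1/8) * x) := Real.exp_pos _
  have hE4pos : (0:ℝ) < Real.exp (-x / 4) := Real.exp_pos _
  refine ⟨?_, ?_, ?_⟩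
  · rw [abs_of_nonpos (by linarith [hf1le1 x hx])]
    have := hb1 x hx
    nlinarith
  · rw [abs_of_pos (hf2pos x hx)]
    nlinarith [hf2bound x hx]
  · rw [hode' x hx]
    have hfx : 0 ≤ f x := hfnonneg x hx
    have h2x : 0 < Dr f 2 x := hf2pos x hx
    rw [abs_of_nonpos (by nlinarith : -(f x * Dr f 2 x) / 2 ≤ 0)]
    have hxle : x ≤ 8 * Real.exp (x / 8) := by
      have := Real.add_one_le_exp (x / 8)
      linarith
    have hprod : Real.exp (x / 8) * Real.exp (-x / 4) = Real.exp (-(1/8) * x) := by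
      rw [← Real.exp_add]; ring_nf
    have hfb : f x * Dr f 2 x ≤ x * (C₂ * Real.exp (-x / 4)) := by
      apply mul_le_mul (hfle x hx) (hf2bound x hx) h2x.le hx
    have : x * (C₂ * Real.exp (-x / 4)) ≤ 8 * Real.exp (x / 8) * (C₂ * Real.exp (-x / 4)) := by
      apply mul_le_mul_of_nonneg_right hxle (by positivity)
    nlinarith [Real.exp_pos (x/8)]
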